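/- arXiv:0712.0663 — 2 statements merged into one kernel-verified Lean document; each statement's English description precedes it below -/
import Mathlib

section
/- If every vertex of a (possibly infinite) digraph G has finite in-degree, then G has a quasi-kernel. -/
/-- There is a directed path of length at most `n` from `x` to `y`. -/
def PathLe {V : Type*} (E : V → V → Prop) (n : ℕ) (x y : V) : Prop :=
  ∃ k ≤ n, ∃ f : ℕ → V, f 0 = x ∧ f k = y ∧ ∀ i < k, E (f i) (f (i + 1))

/-- A directed path of length at most `n` from `x` to `y` all of whose vertices lie in `W`. -/
def PathLeIn {V : Type*} (E : V → V → Prop) (W : Set V) (n : ℕ) (x y : V) : Prop :=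
  ∃ k ≤ n, ∃ f : ℕ → V, f 0 = x ∧ f k = y ∧ (∀ i ≤ k, f i ∈ W) ∧ ∀ i < k, E (f i) (f (i + 1))

/-- `A` spans no edges of `E` (in either direction). -/
def Indep {V : Type*} (E : V → V → Prop) (A : Set V) : Prop :=
  ∀ a ∈ A, ∀ b ∈ A, ¬ E a b

/-- The induced subgraph on `W` is in the class `O_n`: some independent set `A ⊆ W`
reaches every vertex of `W` by a directed path of length at most `n` inside `W`. -/
def OutClass {V : Type*} (E : V → V → Prop) (n : ℕ) (W : Set V) : Prop :=
  ∃ A ⊆ W, Indep E A ∧ ∀ v ∈ W, ∃ a ∈ A, PathLeIn E W n a v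

/-- The induced subgraph on `W` is in the class `I_n`: some independent set `A ⊆ W`
is reached from every vertex of `W` by a directed path of length at most `n` inside `W`. -/
def InClass {V : Type*} (E : V → V → Prop) (n : ℕ) (W : Set V) : Prop :=
  ∃ A ⊆ W, Indep E A ∧ ∀ v ∈ W, ∃ a ∈ A, PathLeIn E W n v a

/-- The induced subgraph on `W` is in `IO(m, ℓ)`. -/
def IOClass {V : Type*} (E : V → V → Prop) (m ℓ : ℕ) (W : Set V) : Prop :=
  ∃ V₁ V₂ : Set V, V₁ ∪ V₂ = W ∧ Disjoint V₁ V₂ ∧ InClass E m V₁ ∧ OutClass E ℓ V₂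

/-- `E` is a tournament: no loops and exactly one direction between distinct vertices. -/
def IsTournament {V : Type*} (E : V → V → Prop) : Prop :=
  (∀ x, ¬ E x x) ∧ ∀ x y, x ≠ y → (E x y ↔ ¬ E y x)

lemma pathLeIn_zero {V : Type*} (E : V → V → Prop) {W : Set V} {a : V} (ha : a ∈ W) (n : ℕ) :
    PathLeIn E W n a a :=
  ⟨0, Nat.zero_le _, fun _ => a, rfl, rfl, fun _ _ => ha, fun i hi => absurd hi (Nat.not_lt_zero i)⟩

lemma pathLeIn_one {V : Type*} (E : V → V → Prop) {W : Set V} {a b : V} (ha : a ∈ W) (hb : b ∈ W)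
    (hab : E a b) {n : ℕ} (hn : 1 ≤ n) : PathLeIn E W n a b := by
  refine ⟨1, hn, fun i => if i = 0 then a else b, by simp, by simp, ?_, ?_⟩
  · intro i _; dsimp only; split <;> assumption
  · intro i hi; interval_cases i; simpa using hab

lemma pathLeIn_two {V : Type*} (E : V → V → Prop) {W : Set V} {a b c : V} (ha : a ∈ W)
    (hb : b ∈ W) (hc : c ∈ W) (hab : E a b) (hbc : E b c) {n : ℕ} (hn : 2 ≤ n) :
    PathLeIn E W n a c := by
  refine ⟨2, hn, fun i => if i = 0 then a else if i = 1 then b else c, by simp, by simp, ?_, ?_⟩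
  · intro i _; dsimp only; split; · assumption
    split <;> assumption
  · intro i hi; interval_cases i <;> simpa

lemma pathLeIn_mono {V : Type*} {E : V → V → Prop} {W W' : Set V} (h : W ⊆ W') {n : ℕ}
    {a b : V} (hp : PathLeIn E W n a b) : PathLeIn E W' n a b := by
  obtain ⟨k, hk, f, h0, hk', hmem, he⟩ := hp
  exact ⟨k, hk, f, h0, hk', fun i hi => h (hmem i hi), he⟩

open Classical in
lemma finite_quasi_kernel {V : Type*} (E : V → V → Prop) (hirr : ∀ v, ¬ E v v)
    (W : Finset V) : ∃ A ⊆ (W : Set V), Indep E A ∧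
      ∀ v ∈ W, ∃ a ∈ A, PathLeIn E (W : Set V) 2 a v := by
  classical
  induction W using Finset.strongInduction with
  | _ W IH =>
  rcases W.eq_empty_or_nonempty with rfl | ⟨v, hv⟩
  · exact ⟨∅, by simp, fun a ha => absurd ha (Set.notMem_empty a), by simp⟩
  · set W' : Finset V := W.erase v |>.filter (fun u => ¬ E v u) with hW'def
    have hW'sub : W' ⊆ W := (Finset.filter_subset _ _).trans (Finset.erase_subset _ _)
    have hvW' : v ∉ W' := fun h => (Finset.notMem_erase v W) (Finset.mem_filter.1 h).1
    have hlt : W' ⊂ W := Finset.ssubset_iff_of_subset hW'sub |>.2 ⟨v, hv, hvW'⟩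
    obtain ⟨A', hA'sub, hA'ind, hA'cov⟩ := IH W' hlt
    have hsub : (W' : Set V) ⊆ (W : Set V) := Finset.coe_subset.2 hW'sub
    -- membership facts
    have hmemW' : ∀ u ∈ W, u ≠ v → ¬ E v u → u ∈ W' := fun u hu hne hE =>
      Finset.mem_filter.2 ⟨Finset.mem_erase.2 ⟨hne, hu⟩, hE⟩
    by_cases hq : ∃ q ∈ A', E q v
    · obtain ⟨q, hqA, hqv⟩ := hq
      have hqW : q ∈ (W : Set V) := hsub (hA'sub hqA)
      refine ⟨A', hA'sub.trans hsub, hA'ind, fun u hu => ?_⟩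
      by_cases huv : u = v
      · exact ⟨q, hqA, huv ▸ pathLeIn_one E hqW hv hqv one_le_two⟩
      by_cases hvu : E v u
      · exact ⟨q, hqA, pathLeIn_two E hqW hv hu hqv hvu le_rfl⟩
      · obtain ⟨a, ha, hp⟩ := hA'cov u (hmemW' u hu huv hvu)
        exact ⟨a, ha, pathLeIn_mono hsub hp⟩
    · push_neg at hq
      refine ⟨insert v A', ?_, ?_, ?_⟩
      · exact Set.insert_subset hv (hA'sub.trans hsub)
      · rintro a ha b hb
        rcases Set.mem_insert_iff.1 ha with hav | ha
        · rcases Set.mem_insert_iff.1 hb with hbv | hb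
          · rw [hav, hbv]; exact hirr v
          · rw [hav]; exact (Finset.mem_filter.1 (hA'sub hb)).2
        · rcases Set.mem_insert_iff.1 hb with hbv | hb
          · rw [hbv]; exact fun h => hq a ha h
          · exact hA'ind a ha b hb
      · intro u hu
        by_cases huv : u = v
        · exact ⟨v, Set.mem_insert v A', huv ▸ pathLeIn_zero E hv 2⟩
        by_cases hvu : E v u
        · exact ⟨v, Set.mem_insert v A', pathLeIn_one E hv hu hvu one_le_two⟩
        · obtain ⟨a, ha, hp⟩ := hA'cov u (hmemW' u hu huv hvu)
          exact ⟨a, Set.mem_insert_of_mem v ha, pathLeIn_mono hsub hp⟩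

lemma pathLeIn_pathLe {V : Type*} {E : V → V → Prop} {W : Set V} {n : ℕ} {a b : V}
    (h : PathLeIn E W n a b) : PathLe E n a b := by
  obtain ⟨k, hk, f, h0, hk', _, he⟩ := h
  exact ⟨k, hk, f, h0, hk', he⟩

lemma cands_finite {V : Type*} (E : V → V → Prop) (hfin : ∀ v : V, {u : V | E u v}.Finite)
    (v : V) : {a : V | PathLe E 2 a v}.Finite := by
  have hsub : {a : V | PathLe E 2 a v} ⊆
      ({v} ∪ {u | E u v}) ∪ ⋃ u ∈ {u : V | E u v}, {w | E w u} := by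
    rintro a ⟨k, hk, f, h0, hkv, he⟩
    interval_cases k
    · left; left; rw [← h0, hkv]; rfl
    · left; right; have := he 0 one_pos; rw [h0] at this
      simpa [hkv] using this
    · right
      have h01 := he 0 two_pos; have h12 := he 1 one_lt_two
      rw [h0] at h01; rw [hkv] at h12
      exact Set.mem_biUnion h12 h01
  exact (((Set.finite_singleton v).union (hfin v)).union
    ((hfin v).biUnion fun u _ => hfin u)).subset hsub

/-- If every vertex has finite in-degree then the digraph has a quasi-kernel. -/
theorem finite_in_degree_quasi_kernel {V : Type*} (E : V → V → Prop)
    (hirr : ∀ v, ¬ E v v) (hfin : ∀ v : V, {u : V | E u v}.Finite) :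
    ∃ A : Set V, Indep E A ∧ ∀ v : V, ∃ a ∈ A, PathLe E 2 a v := by
  classical
  set S : Set (V → Bool) := {g | ∀ a b, E a b → ¬(g a = true ∧ g b = true)} with hS
  set T : V → Set (V → Bool) := fun v => {g | ∃ a, g a = true ∧ PathLe E 2 a v} with hT
  have heq : ∀ a : V, {g : V → Bool | g a = true} = (fun g : V → Bool => g a) ⁻¹' {true} := by
    intro a; ext g; simp
  have hclosed_eval : ∀ a : V, IsClosed {g : V → Bool | g a = true} := by
    intro a; rw [heq a]; exact (isClosed_discrete _).preimage (continuous_apply a)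
  have hopen_eval : ∀ a : V, IsOpen {g : V → Bool | g a = true} := by
    intro a; rw [heq a]; exact (isOpen_discrete _).preimage (continuous_apply a)
  have hScl : IsClosed S := by
    have : S = ⋂ (a : V) (b : V) (_ : E a b),
        ({g : V → Bool | g a = true} ∩ {g | g b = true})ᶜ := by
      ext g
      simp only [hS, Set.mem_setOf_eq, Set.mem_iInter, Set.mem_compl_iff, Set.mem_inter_iff,
        not_and]
    rw [this]
    refine isClosed_iInter fun a => isClosed_iInter fun b => isClosed_iInter fun _ => ?_
    exact ((hopen_eval a).inter (hopen_eval b)).isClosed_compl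
  have hTcl : ∀ v, IsClosed (T v) := by
    intro v
    have : T v = ⋃ a ∈ {a : V | PathLe E 2 a v}, {g : V → Bool | g a = true} := by
      ext g
      simp only [hT, Set.mem_setOf_eq, Set.mem_iUnion]
      tauto
    rw [this]
    exact (cands_finite E hfin v).isClosed_biUnion fun a _ => hclosed_eval a
  have hfip : ∀ t : Finset V, (S ∩ ⋂ v ∈ t, T v).Nonempty := by
    intro t
    obtain ⟨A, hAsub, hAind, hAcov⟩ := finite_quasi_kernel E hirr t
    refine ⟨fun x => decide (x ∈ A), ?_, ?_⟩
    · intro a b hE ⟨hga, hgb⟩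
      rw [decide_eq_true_eq] at hga hgb
      exact hAind a hga b hgb hE
    · simp only [Set.mem_iInter]
      intro v hv
      obtain ⟨a, ha, hp⟩ := hAcov v hv
      exact ⟨a, by simpa using ha, pathLeIn_pathLe hp⟩
  obtain ⟨g, hgS, hgT⟩ := (hScl.isCompact).inter_iInter_nonempty T hTcl hfip
  refine ⟨{x | g x = true}, fun a ha b hb hE => hgS a b hE ⟨ha, hb⟩, fun v => ?_⟩
  have := Set.mem_iInter.1 hgT v
  obtain ⟨a, hga, hp⟩ := this
  exact ⟨a, hga, hp⟩
end

section
/- If a digraph G has a partition (A₁,…,A_k) into finitely many parts such that each induced subgraph G[A_i] is hereditary in IO(1,1), then G ∈ IO(2,2). -/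
section Aux

variable {V : Type*} {E : V → V → Prop} {W W' : Set V} {x y z : V}

lemma pathLeIn_mono_s5 (hW : W ⊆ W') {n n' : ℕ} (hn : n ≤ n')
    (h : PathLeIn E W n x y) : PathLeIn E W' n' x y := by
  obtain ⟨k, hk, f, h0, hk', hmem, hedge⟩ := h
  exact ⟨k, hk.trans hn, f, h0, hk', fun i hi => hW (hmem i hi), hedge⟩

lemma pathLeIn_refl (n : ℕ) (hx : x ∈ W) : PathLeIn E W n x x :=
  ⟨0, Nat.zero_le _, fun _ => x, rfl, rfl, fun i _ => hx, fun i hi => absurd hi (Nat.not_lt_zero i)⟩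

lemma pathLeIn_single (hx : x ∈ W) (hy : y ∈ W) (hE : E x y) : PathLeIn E W 2 x y := by
  refine ⟨1, by norm_num, fun i => if i = 0 then x else y, by simp, by simp, ?_, ?_⟩
  · intro i _
    dsimp only
    split <;> assumption
  · intro i hi
    have : i = 0 := by omega
    subst this
    simpa using hE

lemma pathLeIn_two_s5 (hx : x ∈ W) (hy : y ∈ W) (hz : z ∈ W)
    (e1 : E x y) (e2 : E y z) : PathLeIn E W 2 x z := by
  refine ⟨2, le_refl _, fun i => if i = 0 then x else if i = 1 then y else z, by simp, by simp, ?_, ?_⟩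
  · intro i _
    dsimp only
    split
    · exact hx
    · split <;> assumption
  · intro i hi
    interval_cases i <;> simpa [e1, e2]

lemma pathLeIn_one_elim (h : PathLeIn E W 1 x y) :
    (x = y ∧ x ∈ W) ∨ (E x y ∧ x ∈ W ∧ y ∈ W) := by
  obtain ⟨k, hk, f, h0, hk', hmem, hedge⟩ := h
  interval_cases k
  · left
    refine ⟨h0 ▸ hk', h0 ▸ hmem 0 le_rfl⟩
  · right
    refine ⟨?_, h0 ▸ hmem 0 (by norm_num), hk' ▸ hmem 1 le_rfl⟩
    have := hedge 0 (by norm_num)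
    rwa [h0, hk'] at this

/-- The key merge lemma: a set in `IO(1,1)` plus a disjoint set that is hereditarily
in `IO(2,2)` yields a union in `IO(2,2)`. -/
lemma merge_io (X Q : Set V) (hXQ : Disjoint X Q) (hX : IOClass E 1 1 X)
    (hQ : ∀ Q' ⊆ Q, IOClass E 2 2 Q') : IOClass E 2 2 (X ∪ Q) := by
  classical
  obtain ⟨P₁, P₂, hPu, hPd, ⟨AP, hAPs, hAPi, hAPabs⟩, ⟨BP, hBPs, hBPi, hBPdom⟩⟩ := hX
  set T₁ : Set V := {q | q ∈ Q ∧ ∃ a ∈ AP, E q a} with hT₁def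
  set T₂ : Set V := {q | q ∈ Q ∧ q ∉ T₁ ∧ ∃ b ∈ BP, E b q} with hT₂def
  set Qs : Set V := Q \ (T₁ ∪ T₂) with hQsdef
  obtain ⟨Q₁, Q₂, hQu, hQd, ⟨AQ, hAQs, hAQi, hAQabs⟩, ⟨BQ, hBQs, hBQi, hBQdom⟩⟩ :=
    hQ Qs Set.diff_subset
  -- basic inclusions
  have hP₁X : P₁ ⊆ X := hPu ▸ Set.subset_union_left
  have hP₂X : P₂ ⊆ X := hPu ▸ Set.subset_union_right
  have hT₁Q : T₁ ⊆ Q := fun q hq => hq.1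
  have hT₂Q : T₂ ⊆ Q := fun q hq => hq.1
  have hQsQ : Qs ⊆ Q := Set.diff_subset
  have hQ₁Qs : Q₁ ⊆ Qs := hQu ▸ Set.subset_union_left
  have hQ₂Qs : Q₂ ⊆ Qs := hQu ▸ Set.subset_union_right
  -- no vertex of Qs sends an edge into AP
  have hQs_noA : ∀ q ∈ Qs, ∀ a ∈ AP, ¬ E q a := by
    intro q hq a ha hE
    exact hq.2 (Or.inl ⟨hq.1, a, ha, hE⟩)
  -- no vertex of BP sends an edge into Qs
  have hQs_noB : ∀ q ∈ Qs, ∀ b ∈ BP, ¬ E b q := by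
    intro q hq b hb hE
    by_cases hqT : q ∈ T₁
    · exact hq.2 (Or.inl hqT)
    · exact hq.2 (Or.inr ⟨hq.1, hqT, b, hb, hE⟩)
  refine ⟨P₁ ∪ T₁ ∪ Q₁, P₂ ∪ T₂ ∪ Q₂, ?_, ?_,
    ⟨{a | a ∈ AP ∧ ∀ a' ∈ AQ, ¬ E a a'} ∪ AQ, ?_, ?_, ?_⟩,
    ⟨{b | b ∈ BP ∧ ∀ b' ∈ BQ, ¬ E b' b} ∪ BQ, ?_, ?_, ?_⟩⟩
  · -- union
    have hQcov : T₁ ∪ T₂ ∪ Qs = Q := by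
      apply Set.Subset.antisymm
      · intro q hq
        rcases hq with (hq | hq) | hq
        · exact hT₁Q hq
        · exact hT₂Q hq
        · exact hQsQ hq
      · intro q hq
        by_cases h1 : q ∈ T₁
        · exact Or.inl (Or.inl h1)
        by_cases h2 : q ∈ T₂
        · exact Or.inl (Or.inr h2)
        · exact Or.inr ⟨hq, fun hmem => hmem.elim h1 h2⟩
    calc P₁ ∪ T₁ ∪ Q₁ ∪ (P₂ ∪ T₂ ∪ Q₂)
        = (P₁ ∪ P₂) ∪ (T₁ ∪ T₂ ∪ (Q₁ ∪ Q₂)) := by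
          ext v; simp only [Set.mem_union]; tauto
      _ = X ∪ Q := by rw [hPu, hQu, hQcov]
  · -- disjointness
    rw [Set.disjoint_left]
    rintro v ((hv | hv) | hv)
    · have hvX : v ∈ X := hP₁X hv
      have hvQ : v ∉ Q := fun h => (Set.disjoint_left.mp hXQ hvX) h
      rintro ((h | h) | h)
      · exact Set.disjoint_left.mp hPd hv h
      · exact hvQ (hT₂Q h)
      · exact hvQ (hQsQ (hQ₂Qs h))
    · have hvQ : v ∈ Q := hT₁Q hv
      have hvX : v ∉ X := fun h => (Set.disjoint_left.mp hXQ h) hvQ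
      rintro ((h | h) | h)
      · exact hvX (hP₂X h)
      · exact h.2.1 hv
      · exact (hQ₂Qs h).2 (Or.inl hv)
    · have hvQs : v ∈ Qs := hQ₁Qs hv
      have hvX : v ∉ X := fun h => (Set.disjoint_left.mp hXQ h) (hQsQ hvQs)
      rintro ((h | h) | h)
      · exact hvX (hP₂X h)
      · exact hvQs.2 (Or.inr h)
      · exact Set.disjoint_left.mp hQd hv h
  · -- A ⊆ V₁
    rintro a (ha | ha)
    · exact Or.inl (Or.inl (hAPs ha.1))
    · exact Or.inr (hAQs ha)
  · -- A independent
    rintro a (ha | ha) b (hb | hb)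
    · exact hAPi a ha.1 b hb.1
    · exact ha.2 b hb
    · -- a ∈ AQ, b ∈ AP-kept : a ∈ Qs has no edge into AP
      exact hQs_noA a (hQ₁Qs (hAQs ha)) b hb.1
    · exact hAQi a ha b hb
  · -- absorption within V₁
    rintro v ((hv | hv) | hv)
    · -- v ∈ P₁
      obtain ⟨a, haAP, hpath⟩ := hAPabs v hv
      have haP₁ : a ∈ P₁ := hAPs haAP
      by_cases hkeep : ∀ a' ∈ AQ, ¬ E a a'
      · refine ⟨a, Or.inl ⟨haAP, hkeep⟩, ?_⟩
        rcases pathLeIn_one_elim hpath with ⟨heq, _⟩ | ⟨hE, _, _⟩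
        · exact heq ▸ pathLeIn_refl 2 (Or.inl (Or.inl hv))
        · exact pathLeIn_single (Or.inl (Or.inl hv)) (Or.inl (Or.inl haP₁)) hE
      · push_neg at hkeep
        obtain ⟨a', ha'AQ, hEaa'⟩ := hkeep
        have ha'V : a' ∈ P₁ ∪ T₁ ∪ Q₁ := Or.inr (hAQs ha'AQ)
        refine ⟨a', Or.inr ha'AQ, ?_⟩
        rcases pathLeIn_one_elim hpath with ⟨heq, _⟩ | ⟨hE, _, _⟩
        · rw [heq]
          exact pathLeIn_single (Or.inl (Or.inl haP₁)) ha'V hEaa'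
        · exact pathLeIn_two_s5 (Or.inl (Or.inl hv)) (Or.inl (Or.inl haP₁)) ha'V hE hEaa'
    · -- v ∈ T₁
      obtain ⟨hvQ, a, haAP, hEva⟩ := hv
      have haP₁ : a ∈ P₁ := hAPs haAP
      have hvV : v ∈ P₁ ∪ T₁ ∪ Q₁ := Or.inl (Or.inr ⟨hvQ, a, haAP, hEva⟩)
      by_cases hkeep : ∀ a' ∈ AQ, ¬ E a a'
      · exact ⟨a, Or.inl ⟨haAP, hkeep⟩,
          pathLeIn_single hvV (Or.inl (Or.inl haP₁)) hEva⟩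
      · push_neg at hkeep
        obtain ⟨a', ha'AQ, hEaa'⟩ := hkeep
        exact ⟨a', Or.inr ha'AQ,
          pathLeIn_two_s5 hvV (Or.inl (Or.inl haP₁)) (Or.inr (hAQs ha'AQ)) hEva hEaa'⟩
    · -- v ∈ Q₁
      obtain ⟨a, haAQ, hpath⟩ := hAQabs v hv
      exact ⟨a, Or.inr haAQ, pathLeIn_mono_s5 (fun x hx => Or.inr hx) (le_refl 2) hpath⟩
  · -- B ⊆ V₂
    rintro b (hb | hb)
    · exact Or.inl (Or.inl (hBPs hb.1))
    · exact Or.inr (hBQs hb)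
  · -- B independent
    rintro b (hb | hb) c (hc | hc)
    · exact hBPi b hb.1 c hc.1
    · -- b ∈ BP-kept, c ∈ BQ : BP has no edge into Qs
      exact hQs_noB c (hQ₂Qs (hBQs hc)) b hb.1
    · -- b ∈ BQ, c ∈ BP-kept
      exact hc.2 b hb
    · exact hBQi b hb c hc
  · -- domination within V₂
    rintro v ((hv | hv) | hv)
    · -- v ∈ P₂
      obtain ⟨b, hbBP, hpath⟩ := hBPdom v hv
      have hbP₂ : b ∈ P₂ := hBPs hbBP
      by_cases hkeep : ∀ b' ∈ BQ, ¬ E b' b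
      · refine ⟨b, Or.inl ⟨hbBP, hkeep⟩, ?_⟩
        rcases pathLeIn_one_elim hpath with ⟨heq, _⟩ | ⟨hE, _, _⟩
        · exact heq ▸ pathLeIn_refl 2 (Or.inl (Or.inl hbP₂))
        · exact pathLeIn_single (Or.inl (Or.inl hbP₂)) (Or.inl (Or.inl hv)) hE
      · push_neg at hkeep
        obtain ⟨b', hb'BQ, hEb'b⟩ := hkeep
        have hb'V : b' ∈ P₂ ∪ T₂ ∪ Q₂ := Or.inr (hBQs hb'BQ)
        refine ⟨b', Or.inr hb'BQ, ?_⟩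
        rcases pathLeIn_one_elim hpath with ⟨heq, _⟩ | ⟨hE, _, _⟩
        · rw [← heq]
          exact pathLeIn_single hb'V (Or.inl (Or.inl hbP₂)) hEb'b
        · exact pathLeIn_two_s5 hb'V (Or.inl (Or.inl hbP₂)) (Or.inl (Or.inl hv)) hEb'b hE
    · -- v ∈ T₂
      obtain ⟨hvQ, hvnT₁, b, hbBP, hEbv⟩ := hv
      have hbP₂ : b ∈ P₂ := hBPs hbBP
      have hvV : v ∈ P₂ ∪ T₂ ∪ Q₂ := Or.inl (Or.inr ⟨hvQ, hvnT₁, b, hbBP, hEbv⟩)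
      by_cases hkeep : ∀ b' ∈ BQ, ¬ E b' b
      · exact ⟨b, Or.inl ⟨hbBP, hkeep⟩,
          pathLeIn_single (Or.inl (Or.inl hbP₂)) hvV hEbv⟩
      · push_neg at hkeep
        obtain ⟨b', hb'BQ, hEb'b⟩ := hkeep
        exact ⟨b', Or.inr hb'BQ,
          pathLeIn_two_s5 (Or.inr (hBQs hb'BQ)) (Or.inl (Or.inl hbP₂)) hvV hEb'b hEbv⟩
    · -- v ∈ Q₂
      obtain ⟨b, hbBQ, hpath⟩ := hBQdom v hv
      exact ⟨b, Or.inr hbBQ, pathLeIn_mono_s5 (fun x hx => Or.inr hx) (le_refl 2) hpath⟩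

lemma ioClass_weaken {W : Set V} (h : IOClass E 1 1 W) : IOClass E 2 2 W := by
  obtain ⟨V₁, V₂, hu, hd, ⟨A, hAs, hAi, hAabs⟩, ⟨B, hBs, hBi, hBdom⟩⟩ := h
  exact ⟨V₁, V₂, hu, hd,
    ⟨A, hAs, hAi, fun v hv => (hAabs v hv).imp fun a ⟨ha, hp⟩ =>
      ⟨ha, pathLeIn_mono_s5 (le_refl _) (by norm_num) hp⟩⟩,
    ⟨B, hBs, hBi, fun v hv => (hBdom v hv).imp fun b ⟨hb, hp⟩ =>
      ⟨hb, pathLeIn_mono_s5 (le_refl _) (by norm_num) hp⟩⟩⟩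

lemma aux_partition (E : V → V → Prop) :
    ∀ k : ℕ, ∀ P : Fin (k + 1) → Set V,
      (∀ i, ∀ W ⊆ P i, IOClass E 1 1 W) →
      ∀ W ⊆ ⋃ i, P i, IOClass E 2 2 W := by
  intro k
  induction k with
  | zero =>
    intro P hher W hW
    refine ioClass_weaken (hher 0 W ?_)
    intro w hw
    obtain ⟨S, ⟨i, rfl⟩, hwS⟩ := hW hw
    exact Fin.fin_one_eq_zero i ▸ hwS
  | succ k ih =>
    intro P hher W hW
    set X : Set V := W ∩ P (Fin.last (k + 1)) with hXdef
    set Q : Set V := W \ P (Fin.last (k + 1)) with hQdef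
    have hXQ : Disjoint X Q := by
      rw [Set.disjoint_left]
      rintro v ⟨_, hvP⟩ ⟨_, hvnP⟩
      exact hvnP hvP
    have hunion : X ∪ Q = W := by
      rw [hXdef, hQdef, Set.inter_union_diff]
    have hQsub : ∀ Q' ⊆ Q, IOClass E 2 2 Q' := by
      intro Q' hQ'
      refine ih (fun i => P i.castSucc) (fun i W' hW' => hher i.castSucc W' hW') Q' ?_
      intro q hq
      obtain ⟨hqW, hqnP⟩ := hQ' hq
      obtain ⟨S, ⟨j, rfl⟩, hqS⟩ := hW hqW
      have hj : j ≠ Fin.last (k + 1) := by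
        rintro rfl
        exact hqnP hqS
      obtain ⟨j', rfl⟩ := Fin.exists_castSucc_eq.mpr hj
      exact Set.mem_iUnion.mpr ⟨j', hqS⟩
    have := merge_io X Q hXQ (hher (Fin.last (k + 1)) X Set.inter_subset_right) hQsub
    rwa [hunion] at this

end Aux

/-- A digraph partitioned into finitely many parts each hereditary in `IO(1,1)`
is in `IO(2,2)`. -/
theorem partition_hereditary_io11 {V : Type*} (E : V → V → Prop) (k : ℕ)
    (P : Fin (k + 1) → Set V)
    (hcover : (⋃ i, P i) = Set.univ)
    (hdisj : ∀ i j, i ≠ j → Disjoint (P i) (P j))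
    (hher : ∀ i, ∀ W ⊆ P i, IOClass E 1 1 W) :
    IOClass E 2 2 Set.univ := by
  exact aux_partition E k P hher Set.univ (hcover ▸ Set.Subset.rfl)
end
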